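/- Let μ ∈ ℝ and β ≠ 0. Let g : ℝ → ℝ be C¹ with g(1) = μ and |g'(r) − β| ≤ |β|/4 for all r ∈ [1/2, 3/2]. Let φ : ℝ² → ℝ be differentiable with |φ(x)| ≤ δ and |∇φ(x)| ≤ δ for all x ∈ ℝ², where 0 < δ ≤ |β|/8. Then for every ξ ∈ ℝ there exists a unique t ∈ [−1/2, 1/2] such that g(1 + t) + φ( (1+t)·(cos ξ, sin ξ) ) = μ, and this t satisfies |t| ≤ 4δ/|β|. -/

import Mathlib

lemma aux_pos (β δ : ℝ) (hβ : 0 < β) (hδ0 : 0 < δ) (hδβ : δ ≤ β / 8)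
    (f : ℝ → ℝ) (hf : Differentiable ℝ f)
    (hf' : ∀ t ∈ Set.Icc (-(1 / 2) : ℝ) (1 / 2), |deriv f t - β| ≤ 3 * β / 8)
    (hf0 : |f 0| ≤ δ) :
    ∃ t : ℝ, (t ∈ Set.Icc (-(1 / 2) : ℝ) (1 / 2) ∧ f t = 0 ∧ |t| ≤ 4 * δ / β) ∧
      ∀ t' ∈ Set.Icc (-(1 / 2) : ℝ) (1 / 2), f t' = 0 → t' = t := by
  set s := 4 * δ / β with hs
  have hs0 : 0 < s := by positivity
  have hs2 : s ≤ 1 / 2 := by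
    rw [hs, div_le_iff₀ hβ]; nlinarith
  have hlow : ∀ t ∈ Set.Icc (-(1 / 2) : ℝ) (1 / 2), 5 * β / 8 ≤ deriv f t := by
    intro t ht
    have h := abs_le.1 (hf' t ht)
    linarith [h.1]
  have hmono : ∀ a b : ℝ, -(1 / 2) ≤ a → a < b → b ≤ 1 / 2 →
      f a + 5 * β / 8 * (b - a) ≤ f b := by
    intro a b ha hab hb
    obtain ⟨c, hc, hceq⟩ := exists_deriv_eq_slope f hab
      hf.continuous.continuousOn hf.differentiableOn
    have hcI : c ∈ Set.Icc (-(1 / 2) : ℝ) (1 / 2) :=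
      ⟨by linarith [hc.1], by linarith [hc.2]⟩
    have h := hlow c hcI
    rw [hceq] at h
    have hba : (0 : ℝ) < b - a := by linarith
    rw [le_div_iff₀ hba] at h
    linarith
  have habs := abs_le.1 hf0
  have h5 : 5 * β / 8 * (s - 0) = 5 * δ / 2 := by
    rw [hs]; field_simp; ring
  have hfs : 0 < f s := by
    have := hmono 0 s (by linarith) hs0 hs2
    nlinarith
  have hfns : f (-s) < 0 := by
    have := hmono (-s) 0 (by linarith) (by linarith) (by linarith)
    have h5' : 5 * β / 8 * (0 - -s) = 5 * δ / 2 := by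
      rw [hs]; field_simp; ring
    nlinarith
  have hivt := intermediate_value_Icc (show -s ≤ s by linarith)
    hf.continuous.continuousOn
  have h0mem : (0 : ℝ) ∈ Set.Icc (f (-s)) (f s) := ⟨le_of_lt hfns, le_of_lt hfs⟩
  obtain ⟨t, htI, htf⟩ := hivt h0mem
  have htI2 : t ∈ Set.Icc (-(1 / 2) : ℝ) (1 / 2) :=
    ⟨by linarith [htI.1], by linarith [htI.2]⟩
  refine ⟨t, ⟨htI2, htf, abs_le.2 ⟨by linarith [htI.1], htI.2⟩⟩, ?_⟩
  intro t' ht' hft'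
  rcases lt_trichotomy t' t with h | h | h
  · have := hmono t' t ht'.1 h htI2.2
    nlinarith
  · exact h
  · have := hmono t t' htI2.1 h ht'.2
    nlinarith

lemma aux_gen (β δ : ℝ) (hβ : β ≠ 0) (hδ0 : 0 < δ) (hδβ : δ ≤ |β| / 8)
    (f : ℝ → ℝ) (hf : Differentiable ℝ f)
    (hf' : ∀ t ∈ Set.Icc (-(1 / 2) : ℝ) (1 / 2), |deriv f t - β| ≤ 3 * |β| / 8)
    (hf0 : |f 0| ≤ δ) :
    ∃ t : ℝ, (t ∈ Set.Icc (-(1 / 2) : ℝ) (1 / 2) ∧ f t = 0 ∧ |t| ≤ 4 * δ / |β|) ∧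
      ∀ t' ∈ Set.Icc (-(1 / 2) : ℝ) (1 / 2), f t' = 0 → t' = t := by
  rcases lt_or_gt_of_ne hβ with hneg | hpos
  · have habs : |β| = -β := abs_of_neg hneg
    have hnf : Differentiable ℝ (fun t => -f t) := hf.neg
    have hderiv : ∀ t : ℝ, deriv (fun t => -f t) t = -deriv f t := by
      intro t; exact deriv.neg
    obtain ⟨t, ⟨htI, htf, htb⟩, huniq⟩ := aux_pos (-β) δ (by linarith) hδ0
      (by linarith) (fun t => -f t) hnf
      (by
        intro t ht
        rw [hderiv t]
        have := hf' t ht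
        rw [habs] at this
        calc |(-deriv f t) - -β| = |deriv f t - β| := by rw [← abs_neg]; ring_nf
          _ ≤ 3 * -β / 8 := this)
      (by simpa using hf0)
    refine ⟨t, ⟨htI, neg_eq_zero.mp htf, by
      rw [habs]; exact htb⟩, ?_⟩
    · intro t' ht' hft'
      exact huniq t' ht' (by simp [hft'])
  · have habs : |β| = β := abs_of_pos hpos
    rw [habs] at hδβ hf'
    obtain ⟨t, ⟨htI, htf, htb⟩, huniq⟩ := aux_pos β δ hpos hδ0 hδβ f hf hf' hf0
    exact ⟨t, ⟨htI, htf, by rw [habs]; exact htb⟩, huniq⟩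

/-- Quantitative implicit-function step: the perturbed level set
`{ g(|x|) + φ(x) = μ }` near the unit circle is a polar graph `r = 1 + t(ξ)` with
`|t| ≤ 4δ/|β|`. -/
theorem perturbed_level_set_polar_graph (μ β : ℝ) (hβ : β ≠ 0)
    (g : ℝ → ℝ) (hg : ContDiff ℝ 1 g) (hg1 : g 1 = μ)
    (hg' : ∀ r ∈ Set.Icc (1 / 2 : ℝ) (3 / 2), |deriv g r - β| ≤ |β| / 4)
    (φ : ℝ × ℝ → ℝ) (hφd : Differentiable ℝ φ)
    (δ : ℝ) (hδ0 : 0 < δ) (hδβ : δ ≤ |β| / 8)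
    (hφ : ∀ x, |φ x| ≤ δ) (hφ' : ∀ x, ‖fderiv ℝ φ x‖ ≤ δ) :
    ∀ ξ : ℝ, ∃ t : ℝ,
      (t ∈ Set.Icc (-(1 / 2) : ℝ) (1 / 2) ∧
        g (1 + t) + φ ((1 + t) * Real.cos ξ, (1 + t) * Real.sin ξ) = μ ∧
        |t| ≤ 4 * δ / |β|) ∧
      ∀ t' ∈ Set.Icc (-(1 / 2) : ℝ) (1 / 2),
        g (1 + t') + φ ((1 + t') * Real.cos ξ, (1 + t') * Real.sin ξ) = μ → t' = t := by
  intro ξ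
  set c := Real.cos ξ
  set sn := Real.sin ξ
  set f : ℝ → ℝ := fun t => g (1 + t) + φ ((1 + t) * c, (1 + t) * sn) - μ with hfdef
  have hgd : Differentiable ℝ g := hg.differentiable one_ne_zero
  have hlin : ∀ t : ℝ, HasDerivAt (fun t : ℝ => 1 + t) 1 t := fun t =>
    (hasDerivAt_id t).const_add 1
  have hF : ∀ t : ℝ, HasDerivAt f
      (deriv g (1 + t) + fderiv ℝ φ ((1 + t) * c, (1 + t) * sn) (c, sn)) t := by
    intro t
    have h1 : HasDerivAt (fun t => g (1 + t)) (deriv g (1 + t)) t := by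
      have := ((hgd (1 + t)).hasDerivAt).comp t (hlin t)
      rw [mul_one] at this; exact this
    have hp : HasDerivAt (fun t : ℝ => ((1 + t) * c, (1 + t) * sn)) (c, sn) t := by
      simpa using ((hlin t).mul_const c).prodMk ((hlin t).mul_const sn)
    have h2 : HasDerivAt (fun t => φ ((1 + t) * c, (1 + t) * sn))
        (fderiv ℝ φ ((1 + t) * c, (1 + t) * sn) (c, sn)) t :=
      (hφd ((1 + t) * c, (1 + t) * sn)).hasFDerivAt.comp_hasDerivAt t hp
    exact (h1.add h2).sub_const μ
  have hfdiff : Differentiable ℝ f := fun t => (hF t).differentiableAt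
  have hcs : ‖(c, sn)‖ ≤ 1 := by
    rw [Prod.norm_def]
    exact max_le (by simpa using Real.abs_cos_le_one ξ)
      (by simpa using Real.abs_sin_le_one ξ)
  have hfd' : ∀ t ∈ Set.Icc (-(1 / 2) : ℝ) (1 / 2), |deriv f t - β| ≤ 3 * |β| / 8 := by
    intro t ht
    rw [(hF t).deriv]
    have h1 : |deriv g (1 + t) - β| ≤ |β| / 4 :=
      hg' (1 + t) ⟨by linarith [ht.1], by linarith [ht.2]⟩
    have h2 : |fderiv ℝ φ ((1 + t) * c, (1 + t) * sn) (c, sn)| ≤ δ := by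
      calc |fderiv ℝ φ ((1 + t) * c, (1 + t) * sn) (c, sn)|
          ≤ ‖fderiv ℝ φ ((1 + t) * c, (1 + t) * sn)‖ * ‖(c, sn)‖ :=
            (fderiv ℝ φ ((1 + t) * c, (1 + t) * sn)).le_opNorm _
        _ ≤ δ * 1 := by
            apply mul_le_mul (hφ' _) hcs (norm_nonneg _) (le_of_lt hδ0)
        _ = δ := mul_one δ
    calc |deriv g (1 + t) + fderiv ℝ φ ((1 + t) * c, (1 + t) * sn) (c, sn) - β|
        ≤ |deriv g (1 + t) - β| + |fderiv ℝ φ ((1 + t) * c, (1 + t) * sn) (c, sn)| := by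
          rw [show deriv g (1 + t) + fderiv ℝ φ ((1 + t) * c, (1 + t) * sn) (c, sn) - β
            = (deriv g (1 + t) - β) + fderiv ℝ φ ((1 + t) * c, (1 + t) * sn) (c, sn) by ring]
          exact abs_add_le _ _
      _ ≤ |β| / 4 + δ := add_le_add h1 h2
      _ ≤ 3 * |β| / 8 := by linarith
  have hf0 : |f 0| ≤ δ := by
    simp only [hfdef]
    rw [show (1 : ℝ) + 0 = 1 by ring, hg1]
    rw [show μ + φ (1 * c, 1 * sn) - μ = φ (1 * c, 1 * sn) by ring]
    exact hφ _
  obtain ⟨t, ⟨htI, htf, htb⟩, huniq⟩ := aux_gen β δ hβ hδ0 hδβ f hfdiff hfd' hf0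
  refine ⟨t, ⟨htI, by simpa [hfdef, sub_eq_zero] using htf, htb⟩, ?_⟩
  intro t' ht' heq
  exact huniq t' ht' (by simp [hfdef, heq])
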